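/- Let 𝒢 = (G_1, …, G_τ) be a graph history on a finite vertex set V with |V| = n, and let S_0 = V, S_1, …, S_{n−1} be any score_m peeling sequence. Then max_{0 ≤ i ≤ n−1} f_mm(S_i, 𝒢) = max_{∅ ≠ S ⊆ V} f_mm(S, 𝒢); that is, the greedy minimum-score peeling (the FindBFF_M algorithm) solves the BFF-mm problem optimally. -/
import Mathlib


open scoped Classical
open Finset

/-- The degree of `u` in the subgraph of `G` induced by the vertex set `S`. -/
noncomputable def degIn {n : ℕ} (G : SimpleGraph (Fin n)) (S : Finset (Fin n)) (u : Fin n) : ℕ :=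
  (S.filter fun v => G.Adj u v).card

/-- The number of edges of the subgraph of `G` induced by `S`. -/
noncomputable def edgesIn {n : ℕ} (G : SimpleGraph (Fin n)) (S : Finset (Fin n)) : ℕ :=
  ((S ×ˢ S).filter fun p => p.1 < p.2 ∧ G.Adj p.1 p.2).card

/-- Minimum density `d_m(S, G)`: the minimum degree in the induced subgraph `G[S]`. -/
noncomputable def minDensity {n : ℕ} (G : SimpleGraph (Fin n)) (S : Finset (Fin n)) : ℕ :=
  sInf ((fun u => degIn G S u) '' (S : Set (Fin n)))

/-- Average density `d_a(S, G) = 2·|E(G[S])| / |S|`. -/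
noncomputable def avgDensity {n : ℕ} (G : SimpleGraph (Fin n)) (S : Finset (Fin n)) : ℝ :=
  2 * (edgesIn G S : ℝ) / (S.card : ℝ)

/-- `f_mm(S, 𝒢) = min_t d_m(S, G_t)`. -/
noncomputable def fmm {n τ : ℕ} (G : Fin τ → SimpleGraph (Fin n)) (S : Finset (Fin n)) : ℕ :=
  sInf (Set.range fun t => minDensity (G t) S)

/-- `f_am(S, 𝒢) = (1/τ) · Σ_t d_m(S, G_t)`. -/
noncomputable def fam {n τ : ℕ} (G : Fin τ → SimpleGraph (Fin n)) (S : Finset (Fin n)) : ℝ :=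
  (1 / (τ : ℝ)) * ∑ t, (minDensity (G t) S : ℝ)

/-- `f_ma(S, 𝒢) = min_t d_a(S, G_t)`. -/
noncomputable def fma {n τ : ℕ} (G : Fin τ → SimpleGraph (Fin n)) (S : Finset (Fin n)) : ℝ :=
  sInf (Set.range fun t => avgDensity (G t) S)

/-- `f_aa(S, 𝒢) = (1/τ) · Σ_t d_a(S, G_t)`. -/
noncomputable def faa {n τ : ℕ} (G : Fin τ → SimpleGraph (Fin n)) (S : Finset (Fin n)) : ℝ :=
  (1 / (τ : ℝ)) * ∑ t, avgDensity (G t) S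

/-- `score_m(v, 𝒢[S]) = min_t degree(v, G_t[S])`. -/
noncomputable def scoreM {n τ : ℕ} (G : Fin τ → SimpleGraph (Fin n)) (S : Finset (Fin n))
    (v : Fin n) : ℕ :=
  sInf (Set.range fun t => degIn (G t) S v)

/-- `score_a(v, 𝒢[S]) = (1/τ) · Σ_t degree(v, G_t[S])`. -/
noncomputable def scoreA {n τ : ℕ} (G : Fin τ → SimpleGraph (Fin n)) (S : Finset (Fin n))
    (v : Fin n) : ℝ :=
  (1 / (τ : ℝ)) * ∑ t, (degIn (G t) S v : ℝ)

/-- A `score_m` peeling sequence: `S 0 = V`, and at each step the removed vertex `v i`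
minimizes `score_m` over the current set. -/
def IsScoreMPeeling {n τ : ℕ} (G : Fin τ → SimpleGraph (Fin n)) (S : ℕ → Finset (Fin n))
    (v : ℕ → Fin n) : Prop :=
  S 0 = Finset.univ ∧
    ∀ i < n - 1, v i ∈ S i ∧ S (i + 1) = S i \ {v i} ∧
      ∀ u ∈ S i, scoreM G (S i) (v i) ≤ scoreM G (S i) u

/-- A `score_a` peeling sequence: `S 0 = V`, and at each step the removed vertex `v i`
minimizes `score_a` over the current set. -/
def IsScoreAPeeling {n τ : ℕ} (G : Fin τ → SimpleGraph (Fin n)) (S : ℕ → Finset (Fin n))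
    (v : ℕ → Fin n) : Prop :=
  S 0 = Finset.univ ∧
    ∀ i < n - 1, v i ∈ S i ∧ S (i + 1) = S i \ {v i} ∧
      ∀ u ∈ S i, scoreA G (S i) (v i) ≤ scoreA G (S i) u

lemma degIn_mono {n : ℕ} (G : SimpleGraph (Fin n)) {S T : Finset (Fin n)} (h : S ⊆ T)
    (u : Fin n) : degIn G S u ≤ degIn G T u :=
  Finset.card_le_card (Finset.filter_subset_filter _ h)

lemma scoreM_mono {n τ : ℕ} (hτ : 0 < τ) (G : Fin τ → SimpleGraph (Fin n))
    {S T : Finset (Fin n)} (h : S ⊆ T) (u : Fin n) :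
    scoreM G S u ≤ scoreM G T u := by
  have hne : (Set.range fun t => degIn (G t) T u).Nonempty := ⟨_, ⟨⟨0, hτ⟩, rfl⟩⟩
  obtain ⟨t0, ht0⟩ := Nat.sInf_mem hne
  calc scoreM G S u ≤ degIn (G t0) S u := Nat.sInf_le ⟨t0, rfl⟩
    _ ≤ degIn (G t0) T u := degIn_mono _ h u
    _ = scoreM G T u := ht0

lemma fmm_le_scoreM {n τ : ℕ} (hτ : 0 < τ) (G : Fin τ → SimpleGraph (Fin n))
    {S : Finset (Fin n)} {u : Fin n} (hu : u ∈ S) :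
    fmm G S ≤ scoreM G S u := by
  have hne : (Set.range fun t => degIn (G t) S u).Nonempty := ⟨_, ⟨⟨0, hτ⟩, rfl⟩⟩
  obtain ⟨t0, ht0⟩ := Nat.sInf_mem hne
  calc fmm G S ≤ minDensity (G t0) S := Nat.sInf_le ⟨t0, rfl⟩
    _ ≤ degIn (G t0) S u := Nat.sInf_le ⟨u, hu, rfl⟩
    _ = scoreM G S u := ht0

lemma scoreM_le_fmm {n τ : ℕ} (hτ : 0 < τ) (G : Fin τ → SimpleGraph (Fin n))
    {S : Finset (Fin n)} (hS : S.Nonempty) {w : Fin n}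
    (hw : ∀ u ∈ S, scoreM G S w ≤ scoreM G S u) :
    scoreM G S w ≤ fmm G S := by
  have hne : (Set.range fun t => minDensity (G t) S).Nonempty := ⟨_, ⟨⟨0, hτ⟩, rfl⟩⟩
  obtain ⟨t0, ht0⟩ := Nat.sInf_mem hne
  have hne2 : ((fun u => degIn (G t0) S u) '' (S : Set (Fin n))).Nonempty :=
    ⟨_, ⟨hS.choose, hS.choose_spec, rfl⟩⟩
  obtain ⟨u0, hu0S, hu0⟩ := Nat.sInf_mem hne2
  calc scoreM G S w ≤ scoreM G S u0 := hw u0 hu0S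
    _ ≤ degIn (G t0) S u0 := Nat.sInf_le ⟨t0, rfl⟩
    _ = minDensity (G t0) S := hu0
    _ = fmm G S := ht0

/-- The greedy minimum-`score_m` peeling (the `FindBFF_M` algorithm) solves
the BFF-mm problem optimally: the maximum of `f_mm` over the peeling chain equals the maximum
of `f_mm` over all nonempty subsets of `V`. -/
theorem findBffM_optimal_for_bff_mm {n τ : ℕ} (hn : 0 < n) (hτ : 0 < τ)
    (G : Fin τ → SimpleGraph (Fin n)) (S : ℕ → Finset (Fin n)) (v : ℕ → Fin n)
    (hpeel : IsScoreMPeeling G S v) :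
    ∃ i < n, (S i).Nonempty ∧
      ∀ S' : Finset (Fin n), S'.Nonempty → fmm G S' ≤ fmm G (S i) := by
  obtain ⟨h0, hstep⟩ := hpeel
  -- cardinality of the chain
  have hcard : ∀ i ≤ n - 1, (S i).card = n - i := by
    intro i hi
    induction i with
    | zero => simp [h0]
    | succ k ih =>
      have hk : k < n - 1 := hi
      obtain ⟨hvk, hSk, _⟩ := hstep k hk
      have := ih (le_of_lt hk)
      rw [hSk, Finset.sdiff_singleton_eq_erase, Finset.card_erase_of_mem hvk, this]
      omega
  have hne : ∀ i < n, (S i).Nonempty := by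
    intro i hi
    have : (S i).card = n - i := hcard i (by omega)
    exact Finset.card_pos.mp (by omega)
  -- the step index dominating a given nonempty S'
  have key : ∀ S' : Finset (Fin n), S'.Nonempty → ∃ j < n, fmm G S' ≤ fmm G (S j) := by
    intro S' hS'
    by_cases hsub : S' ⊆ S (n - 1)
    · refine ⟨n - 1, by omega, ?_⟩
      have h1 : (S (n - 1)).card = n - (n - 1) := hcard _ le_rfl
      have : S' = S (n - 1) := Finset.eq_of_subset_of_card_le hsub (by
        have := Finset.card_pos.mpr hS'
        omega)
      rw [this]
    · have hP0 : S' ⊆ S 0 := by rw [h0]; exact Finset.subset_univ _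
      have hex : ∃ k, ¬ S' ⊆ S k := ⟨n - 1, hsub⟩
      classical
      have hkne : ¬ S' ⊆ S (Nat.find hex) := Nat.find_spec hex
      have hkpos : 0 < Nat.find hex := by
        rcases Nat.eq_zero_or_pos (Nat.find hex) with h | h
        · exact absurd (h ▸ hP0) (h ▸ hkne)
        · exact h
      have hkle : Nat.find hex ≤ n - 1 := Nat.find_min' hex hsub
      obtain ⟨j, hkeq⟩ : ∃ j, Nat.find hex = j + 1 := ⟨Nat.find hex - 1, by omega⟩
      rw [hkeq] at hkne hkle
      have hj : j < n - 1 := by omega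
      have hPj : S' ⊆ S j := by
        by_contra h
        exact absurd (Nat.find_min hex (by omega)) (not_not.mpr h)
      obtain ⟨hvj, hSj, hmin⟩ := hstep j hj
      -- v j ∈ S'
      obtain ⟨x, hxS', hxn⟩ := Finset.not_subset.mp hkne
      have hx : x = v j := by
        rw [hSj] at hxn
        have hxj : x ∈ S j := hPj hxS'
        simp only [Finset.mem_sdiff, Finset.mem_singleton, not_and, not_not] at hxn
        exact hxn hxj
      have hvS' : v j ∈ S' := hx ▸ hxS'
      refine ⟨j, by omega, ?_⟩
      calc fmm G S' ≤ scoreM G S' (v j) := fmm_le_scoreM hτ G hvS'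
        _ ≤ scoreM G (S j) (v j) := scoreM_mono hτ G hPj _
        _ ≤ fmm G (S j) := scoreM_le_fmm hτ G (hne j (by omega)) hmin
  -- pick the best index over the chain
  obtain ⟨i, hi, hbest⟩ := Finset.exists_max_image (Finset.range n)
    (fun i => fmm G (S i)) ⟨0, Finset.mem_range.mpr hn⟩
  refine ⟨i, Finset.mem_range.mp hi, hne i (Finset.mem_range.mp hi), ?_⟩
  intro S' hS'
  obtain ⟨j, hj, hle⟩ := key S' hS'
  exact hle.trans (hbest j (Finset.mem_range.mpr hj))
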